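/- Let $H$ be a real Hilbert space $G \subseteq H$ closed convex, and $f_i : G \to \mathbb{R}$ convex, lower semi-continuous, and $L$-Lipschitz for $i = 1, \dots, n$, with $f := \sum_{i=1}^n f_i$ being $K$-convex for some $K > 0$ with unique minimizer $y \in G$. Let $\lambda_k > 0$ satisfy $\lambda_k K < 1$. Define $x_{kn+i} := J_{\lambda_k}^{f_i}(x_{kn+i-1})$ (proximal steps over $G$). Then for all $k$: $\|y - x_{(k+1)n}\|^2 \leq (1 - \lambda_k K)\|y - x_{kn}\|^2 + 2\lambda_k^2 L^2 n(n+1)$. -/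

import Mathlib

open Finset in
private lemma prox_key {H : Type*} [NormedAddCommGroup H] [InnerProductSpace ℝ H]
    {G : Set H} (hGconv : Convex ℝ G) {g : H → ℝ} (hg : ConvexOn ℝ G g)
    {lam : ℝ} (hlam : 0 < lam) {x x' : H} (hx' : x' ∈ G)
    (hmin : IsMinOn (fun z => g z + ‖x - z‖ ^ 2 / (2 * lam)) G x') :
    ∀ z ∈ G, 2 * lam * (g x' - g z) ≤ ‖x - z‖ ^ 2 - ‖x - x'‖ ^ 2 - ‖z - x'‖ ^ 2 := by
  intro z hz
  set a := x - x' with ha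
  set b := z - x' with hb
  have hid : ‖x - z‖ ^ 2 - ‖x - x'‖ ^ 2 - ‖z - x'‖ ^ 2 = -2 * (inner ℝ a b : ℝ) := by
    have h1 : x - z = a - b := by rw [ha, hb]; abel
    rw [h1, @norm_sub_sq_real]
    ring
  rw [hid]
  have key : ∀ t : ℝ, 0 < t → t ≤ 1 →
      2 * lam * (g x' - g z) ≤ -2 * (inner ℝ a b : ℝ) + t * ‖b‖ ^ 2 := by
    intro t ht ht1
    have hw : (1 - t) • x' + t • z ∈ G := hGconv hx' hz (by linarith) ht.le (by ring)
    have h1 := hmin hw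
    simp only [Set.mem_setOf_eq] at h1
    have hxw : x - ((1 - t) • x' + t • z) = a - t • b := by
      rw [ha, hb, smul_sub, sub_smul, one_smul]; abel
    have h2 : ‖x - ((1 - t) • x' + t • z)‖ ^ 2
        = ‖a‖ ^ 2 - 2 * (t * (inner ℝ a b : ℝ)) + t ^ 2 * ‖b‖ ^ 2 := by
      rw [hxw, @norm_sub_sq_real, real_inner_smul_right, norm_smul, mul_pow]
      simp [abs_of_pos ht]
    have h3 : g ((1 - t) • x' + t • z) ≤ (1 - t) * g x' + t * g z :=
      hg.2 hx' hz (by linarith) ht.le (by ring)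
    rw [h2] at h1
    have h2l : (0 : ℝ) < 2 * lam := by linarith
    have h4 : t * (2 * lam * (g x' - g z)) ≤ t * (-2 * (inner ℝ a b : ℝ) + t * ‖b‖ ^ 2) := by
      rw [← ha] at h1
      have h5 := mul_le_mul_of_nonneg_right h1 h2l.le
      simp only [add_mul, div_mul_cancel₀ _ h2l.ne'] at h5
      nlinarith [h3, h5]
    exact le_of_mul_le_mul_left h4 ht
  refine le_of_forall_pos_le_add fun ε hε => ?_
  have hB : (0 : ℝ) < ‖b‖ ^ 2 + 1 := by positivity
  set t := min 1 (ε / (‖b‖ ^ 2 + 1)) with htdef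
  have ht : 0 < t := lt_min one_pos (div_pos hε hB)
  have h6 := key t ht (min_le_left _ _)
  have h7 : t * ‖b‖ ^ 2 ≤ ε := by
    have h8 : t ≤ ε / (‖b‖ ^ 2 + 1) := min_le_right _ _
    have h9 := mul_le_mul_of_nonneg_right h8 hB.le
    rw [div_mul_cancel₀ _ hB.ne'] at h9
    nlinarith [ht.le]
  linarith

theorem stmt11 {H : Type*} [NormedAddCommGroup H] [InnerProductSpace ℝ H]
    [CompleteSpace H]
    (G : Set H) (hGclosed : IsClosed G) (hGconv : Convex ℝ G)
    (n : ℕ) (hn : 1 ≤ n) (f : Fin n → H → ℝ)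
    (hfconv : ∀ i, ConvexOn ℝ G (f i))
    (hflsc : ∀ i, LowerSemicontinuousOn (f i) G)
    (L : ℝ) (hL : 1 ≤ L)
    (hLip : ∀ i, ∀ u ∈ G, ∀ v ∈ G, |f i u - f i v| ≤ L * ‖u - v‖)
    (K : ℝ) (hK : 0 < K)
    (hKconv : ∀ u ∈ G, ∀ v ∈ G, ∀ t ∈ Set.Icc (0 : ℝ) 1,
      ∑ i, f i ((1 - t) • u + t • v) ≤
        (1 - t) * ∑ i, f i u + t * ∑ i, f i v - K / 2 * t * (1 - t) * ‖u - v‖ ^ 2)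
    (y : H) (hyG : y ∈ G) (hymin : ∀ z ∈ G, ∑ i, f i y ≤ ∑ i, f i z)
    (lam : ℕ → ℝ) (hlam : ∀ k, 0 < lam k) (hlamK : ∀ k, lam k * K < 1)
    (x : ℕ → H) (hxG : ∀ m, x m ∈ G)
    (hstep : ∀ (k : ℕ) (i : Fin n),
      IsMinOn (fun z => f i z + ‖x (k * n + i.1) - z‖ ^ 2 / (2 * lam k)) G
        (x (k * n + i.1 + 1))) :
    ∀ k : ℕ, ‖y - x ((k + 1) * n)‖ ^ 2 ≤
      (1 - lam k * K) * ‖y - x (k * n)‖ ^ 2 + 2 * (lam k) ^ 2 * L ^ 2 * n * (n + 1) := by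
  intro k
  have hlk0 : 0 < lam k := hlam k
  have hLpos : (0 : ℝ) < L := by linarith
  -- strong convexity inequality at the minimizer
  have hstrong : ∀ z ∈ G, K / 2 * ‖y - z‖ ^ 2 ≤ (∑ i, f i z) - (∑ i, f i y) := by
    intro z hz
    refine le_of_forall_pos_le_add fun ε hε => ?_
    have hB : (0 : ℝ) < K / 2 * ‖y - z‖ ^ 2 + 1 := by positivity
    set t := min 1 (ε / (K / 2 * ‖y - z‖ ^ 2 + 1)) with htd
    have ht : 0 < t := lt_min one_pos (div_pos hε hB)
    have ht1 : t ≤ 1 := min_le_left _ _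
    have hco := hKconv y hyG z hz t ⟨ht.le, ht1⟩
    have hmem : (1 - t) • y + t • z ∈ G := hGconv hyG hz (by linarith) ht.le (by ring)
    have hmy := hymin _ hmem
    have h4 : t * ((∑ i, f i y) + K / 2 * (1 - t) * ‖y - z‖ ^ 2) ≤ t * (∑ i, f i z) := by
      nlinarith [hco, hmy]
    have h5 := le_of_mul_le_mul_left h4 ht
    have h6 : t * (K / 2 * ‖y - z‖ ^ 2) ≤ ε := by
      have h7 : t ≤ ε / (K / 2 * ‖y - z‖ ^ 2 + 1) := min_le_right _ _
      have h8 := mul_le_mul_of_nonneg_right h7 hB.le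
      rw [div_mul_cancel₀ _ hB.ne'] at h8
      nlinarith [ht.le]
    nlinarith [h5, h6]
  -- bound on a single proximal step
  have hstepb : ∀ j, j < n → ‖x (k * n + j + 1) - x (k * n + j)‖ ≤ lam k * L := by
    intro j hj
    have hp := prox_key hGconv (hfconv ⟨j, hj⟩) hlk0 (hxG (k * n + j + 1))
      (hstep k ⟨j, hj⟩) (x (k * n + j)) (hxG (k * n + j))
    have hl := hLip ⟨j, hj⟩ (x (k * n + j + 1)) (hxG _) (x (k * n + j)) (hxG _)
    rw [abs_le] at hl
    have e0 : ‖x (k * n + j) - x (k * n + j)‖ = 0 := by simp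
    have e1 : ‖x (k * n + j) - x (k * n + j + 1)‖ = ‖x (k * n + j + 1) - x (k * n + j)‖ :=
      norm_sub_rev _ _
    rw [e0, e1] at hp
    set c := ‖x (k * n + j + 1) - x (k * n + j)‖ with hc
    have hc0 : 0 ≤ c := norm_nonneg _
    rcases eq_or_lt_of_le hc0 with h | h
    · rw [← h]; positivity
    · nlinarith [hp, hl.1, h]
  -- distance from the start of the cycle
  have hdist : ∀ j, j ≤ n → ‖x (k * n + j) - x (k * n)‖ ≤ j * (lam k * L) := by
    intro j
    induction j with
    | zero => intro _; simp
    | succ m ih =>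
      intro hm
      have h1 := ih (by omega)
      have h2 := hstepb m (by omega)
      have h3 := dist_triangle (x (k * n + m + 1)) (x (k * n + m)) (x (k * n))
      simp only [dist_eq_norm] at h3
      have he : k * n + (m + 1) = k * n + m + 1 := by omega
      rw [he]
      push_cast
      nlinarith [h1, h2, h3]
  -- natural-number indexed version of f
  set F : ℕ → H → ℝ := fun i z => if h : i < n then f ⟨i, h⟩ z else 0 with hF
  have hFsum : ∀ z, ∑ i ∈ Finset.range n, F i z = ∑ i, f i z := by
    intro z
    rw [← Fin.sum_univ_eq_sum_range (fun j => F j z) n]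
    exact Finset.sum_congr rfl fun i _ => by simp [hF, i.isLt]
  -- one-step decrease of the distance to y
  have hper : ∀ j, j < n →
      ‖y - x (k * n + j + 1)‖ ^ 2 ≤ ‖y - x (k * n + j)‖ ^ 2
        - 2 * lam k * (F j (x (k * n + j + 1)) - F j y) := by
    intro j hj
    have hp := prox_key hGconv (hfconv ⟨j, hj⟩) hlk0 (hxG (k * n + j + 1))
      (hstep k ⟨j, hj⟩) y hyG
    have hFj : ∀ z, F j z = f ⟨j, hj⟩ z := fun z => by simp [hF, hj]
    rw [hFj, hFj]
    rw [norm_sub_rev (x (k * n + j)) y] at hp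
    nlinarith [hp, sq_nonneg ‖x (k * n + j) - x (k * n + j + 1)‖]
  -- telescoping over the cycle
  have htel : ∀ j, j ≤ n → ‖y - x (k * n + j)‖ ^ 2 ≤ ‖y - x (k * n)‖ ^ 2
      - 2 * lam k * ∑ i ∈ Finset.range j, (F i (x (k * n + i + 1)) - F i y) := by
    intro j
    induction j with
    | zero => intro _; simp
    | succ m ih =>
      intro hm
      have h1 := ih (by omega)
      have h2 := hper m (by omega)
      have he : k * n + (m + 1) = k * n + m + 1 := by omega
      rw [he, Finset.sum_range_succ]
      have h3 : 2 * lam k * ((∑ i ∈ Finset.range m, (F i (x (k * n + i + 1)) - F i y))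
            + (F m (x (k * n + m + 1)) - F m y))
          = 2 * lam k * (∑ i ∈ Finset.range m, (F i (x (k * n + i + 1)) - F i y))
            + 2 * lam k * (F m (x (k * n + m + 1)) - F m y) := by ring
      linarith [h1, h2, h3.le]
  -- bound on the drift within the cycle
  have hdrift : ∀ i ∈ Finset.range n,
      F i (x (k * n)) - F i (x (k * n + i + 1)) ≤ L * ((n : ℝ) * (lam k * L)) := by
    intro i hi
    rw [Finset.mem_range] at hi
    have hl := hLip ⟨i, hi⟩ (x (k * n)) (hxG _) (x (k * n + i + 1)) (hxG _)
    rw [abs_le] at hl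
    have hFi : ∀ z, F i z = f ⟨i, hi⟩ z := fun z => by simp [hF, hi]
    have hd : ‖x (k * n + i + 1) - x (k * n)‖ ≤ (n : ℝ) * (lam k * L) := by
      have h1 := hdist (i + 1) (by omega)
      have h2 : ((i : ℝ) + 1) ≤ (n : ℝ) := by exact_mod_cast hi
      have he : k * n + (i + 1) = k * n + i + 1 := by omega
      rw [he] at h1
      push_cast at h1
      nlinarith [h1, h2, mul_pos hlk0 hLpos]
    have h3 : ‖x (k * n) - x (k * n + i + 1)‖ = ‖x (k * n + i + 1) - x (k * n)‖ :=
      norm_sub_rev _ _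
    rw [hFi, hFi]
    rw [h3] at hl
    nlinarith [hl.2, hd, hLpos]
  -- assemble everything
  have hsum : ∑ i ∈ Finset.range n, (F i (x (k * n)) - F i (x (k * n + i + 1)))
      ≤ (n : ℝ) * (L * ((n : ℝ) * (lam k * L))) := by
    have := Finset.sum_le_card_nsmul (Finset.range n) _ _ hdrift
    rwa [Finset.card_range, nsmul_eq_mul] at this
  have hsplit : ∑ i ∈ Finset.range n, (F i (x (k * n + i + 1)) - F i y)
      = (∑ i, f i (x (k * n))) - (∑ i, f i y)
        - ∑ i ∈ Finset.range n, (F i (x (k * n)) - F i (x (k * n + i + 1))) := by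
    rw [← hFsum (x (k * n)), ← hFsum y, ← Finset.sum_sub_distrib, ← Finset.sum_sub_distrib]
    apply Finset.sum_congr rfl
    intro i _
    ring
  have hS : K / 2 * ‖y - x (k * n)‖ ^ 2 - (n : ℝ) * (L * ((n : ℝ) * (lam k * L)))
      ≤ ∑ i ∈ Finset.range n, (F i (x (k * n + i + 1)) - F i y) := by
    have h1 := hstrong (x (k * n)) (hxG _)
    rw [hsplit]
    linarith [h1, hsum]
  have hfin := htel n le_rfl
  have he2 : (k + 1) * n = k * n + n := by ring
  rw [he2]
  have hmul := mul_le_mul_of_nonneg_left hS (by linarith : (0 : ℝ) ≤ 2 * lam k)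
  have hn1 : (1 : ℝ) ≤ (n : ℝ) := by exact_mod_cast hn
  nlinarith [hfin, hmul, mul_pos hlk0 hlk0, sq_nonneg (lam k * L), hn1,
    mul_nonneg (mul_nonneg (sq_nonneg (lam k)) (sq_nonneg L)) (le_of_lt (lt_of_lt_of_le one_pos hn1))]
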